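/- Let p ≥ 2 be an integer and let i ∈ {1,…,2^{p+4}}ⁿ. Then the set A_p^{(i)} + 𝓒_{2^p} is 2^{p+3}√n-admissible Whitney. -/

import Mathlib

set_option maxHeartbeats 2000000


open MeasureTheory Metric Set

noncomputable section

/-- Euclidean space ℝⁿ. -/
abbrev E (n : ℕ) := EuclideanSpace ℝ (Fin n)

/-- m(x) = min {1, 1/|x|} (with value 1 at x = 0). -/
def mFun {n : ℕ} (x : E n) : ℝ := if ‖x‖ ≤ 1 then 1 else ‖x‖⁻¹

/-- The dyadic cube `2^{-m}(v + [0,1)ⁿ)` of `Δ_m`. -/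
def dyadicCube (n : ℕ) (m : ℤ) (v : Fin n → ℤ) : Set (E n) :=
  {y | ∀ i, y i ∈ Set.Ico ((2 : ℝ) ^ (-m) * v i) ((2 : ℝ) ^ (-m) * (v i + 1))}

/-- The layers `L_0 = [-1,1)ⁿ` and `L_l = [-2^l,2^l)ⁿ \ [-2^{l-1},2^{l-1})ⁿ` for `l ≥ 1`. -/
def layer (n : ℕ) (l : ℕ) : Set (E n) :=
  if l = 0 then {y | ∀ i, y i ∈ Set.Ico (-1 : ℝ) 1}
  else {y | ∀ i, y i ∈ Set.Ico (-(2 : ℝ) ^ l) ((2 : ℝ) ^ l)} \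
       {y | ∀ i, y i ∈ Set.Ico (-(2 : ℝ) ^ (l - 1)) ((2 : ℝ) ^ (l - 1))}

/-- `A + 𝓒_α`: the set of centres of balls in `𝓑_α` that intersect `A`. -/
def plusC (n : ℕ) (α : ℝ) (A : Set (E n)) : Set (E n) :=
  {z | ∃ r : ℝ, 0 ≤ r ∧ r ≤ α * mFun z ∧ (ball z r ∩ A).Nonempty}

/-- A set `A ⊆ ℝⁿ` is `λ`-admissible Whitney if `d(x, ∁A) ≤ λ m(x)` for all `x ∈ A`. -/
def AdmWhitney (n : ℕ) (lam : ℝ) (A : Set (E n)) : Prop :=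
  ∀ x ∈ A, infDist x Aᶜ ≤ lam * mFun x

/-- `A_p^{(i)}`: the union of all cubes `Q = 2^{-l}(v + [0,1)ⁿ) ∈ Δ^γ_{0,l}` with `l ≥ p+2`
having label `i`, where (with `κ = p+4`) the label of such a cube is
`(v j mod 2^{p+4}) + 1 ∈ {1,…,2^{p+4}}ⁿ`. -/
def Ap (n p : ℕ) (i : Fin n → ℤ) : Set (E n) :=
  ⋃ (l : ℕ) (_ : p + 2 ≤ l) (v : Fin n → ℤ)
    (_ : dyadicCube n l v ⊆ layer n l)
    (_ : ∀ j, v j % (2 ^ (p + 4) : ℤ) + 1 = i j),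
    dyadicCube n l v


-- ## Auxiliary lemmas
section auxLemmas


lemma lower_abs (A B : ℝ) : |A| - |B| ≤ |A + B| := by
  have h := abs_add_le (A + B) (-B)
  simp only [add_neg_cancel_right, abs_neg] at h
  linarith

lemma abs_half_int (P : ℝ) (hP : 0 ≤ P) (m : ℤ) : P/2 ≤ |P * (1/2 + m)| := by
  rw [abs_mul, abs_of_nonneg hP]
  have h : (1:ℝ)/2 ≤ |1/2 + (m:ℝ)| := by
    rcases le_or_gt 0 m with h | h
    · have h' : (0:ℝ) ≤ m := by exact_mod_cast h
      rw [abs_of_nonneg (by linarith)]; linarith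
    · have hm' : m ≤ -1 := by omega
      have hm : (m:ℝ) ≤ -1 := by exact_mod_cast hm'
      rw [abs_of_nonpos (by linarith)]; linarith
  nlinarith

lemma abs_odd_int (P σ : ℝ) (hP : 0 ≤ P) (hσ : σ = 1 ∨ σ = -1) (m : ℤ) :
    P ≤ |P * (σ + 2*m)| := by
  rw [abs_mul, abs_of_nonneg hP]
  have h : (1:ℝ) ≤ |σ + 2*(m:ℝ)| := by
    rcases hσ with rfl | rfl
    · rcases le_or_gt 0 m with h | h
      · have h' : (0:ℝ) ≤ m := by exact_mod_cast h
        rw [abs_of_nonneg (by linarith)]; linarith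
      · have hm' : m ≤ -1 := by omega
        have hm : (m:ℝ) ≤ -1 := by exact_mod_cast hm'
        rw [abs_of_nonpos (by linarith)]; linarith
    · rcases le_or_gt 1 m with h | h
      · have h' : (1:ℝ) ≤ m := by exact_mod_cast h
        rw [abs_of_nonneg (by linarith)]; linarith
      · have hm' : m ≤ 0 := by omega
        have hm : (m:ℝ) ≤ 0 := by exact_mod_cast hm'
        rw [abs_of_nonpos (by linarith)]; linarith
  nlinarith

/-- The core one-dimensional construction. -/
lemma oneDim (P h₁ h₂ D x₀ ρ₁ ρ₂ : ℝ) (hP : 0 < P) (h₁0 : 0 ≤ h₁) (h₁₂ : h₁ ≤ h₂)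
    (hD : 0 ≤ D) (hgap : D + h₂/2 ≤ P/2) :
    ∃ t : ℝ, |t - x₀| ≤ P/2 + D + h₂/2 ∧
      (∀ (q : ℤ) (θ : ℝ), 0 ≤ θ → θ ≤ h₁ → D ≤ |t - (ρ₁ + P * q + θ)|) ∧
      (∀ (q : ℤ) (θ : ℝ), 0 ≤ θ → θ ≤ h₂ → D ≤ |t - (ρ₂ + (2*P) * q + θ)|) := by
  have h₂0 : 0 ≤ h₂ := le_trans h₁0 h₁₂
  set b := ρ₁ + h₁/2 + P/2 with hb
  set k₀ : ℤ := round ((x₀ - b)/P) with hk₀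
  set c := b + P * k₀ with hc
  have hcx : |c - x₀| ≤ P/2 := by
    have h := abs_sub_round ((x₀ - b)/P)
    rw [abs_sub_comm] at h
    have h2 : |(c - x₀)/P| ≤ 1/2 := by
      have heq : (c - x₀)/P = (k₀ : ℝ) - (x₀ - b)/P := by
        field_simp [hc]; ring
      rw [heq]; exact h
    rw [abs_div, abs_of_pos hP, div_le_iff₀ hP] at h2
    linarith
  set q₂ : ℤ := round ((c - (ρ₂ + h₂/2))/(2*P)) with hq₂
  set e := c - (ρ₂ + h₂/2) - (2*P) * q₂ with he
  have heP : |e| ≤ P := by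
    have h := abs_sub_round ((c - (ρ₂ + h₂/2))/(2*P))
    rw [abs_sub_comm] at h
    have h2P : (0:ℝ) < 2*P := by linarith
    have h2 : |e/(2*P)| ≤ 1/2 := by
      have heq : e/(2*P) = (c - (ρ₂ + h₂/2))/(2*P) - (q₂:ℝ) := by
        rw [he]; field_simp
      rw [heq, abs_sub_comm]; exact h
    rw [abs_div, abs_of_pos h2P, div_le_iff₀ h2P] at h2
    linarith
  have fam1 : ∀ (z : ℤ) (w : ℝ), ∀ (q : ℤ) (θ : ℝ), 0 ≤ θ → θ ≤ h₁ →
      P/2 - |w| - h₁/2 ≤ |(c + P*z + w) - (ρ₁ + P * q + θ)| := by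
    intro z w q θ hθ0 hθ1
    have key : (c + P*z + w) - (ρ₁ + P * q + θ)
        = P * (1/2 + ((k₀ + z - q : ℤ) : ℝ)) + (w + (h₁/2 - θ)) := by
      push_cast [hc, hb]; ring
    rw [key]
    have h1 := abs_half_int P (le_of_lt hP) (k₀ + z - q)
    have h2 := lower_abs (P * (1/2 + ((k₀ + z - q : ℤ) : ℝ))) (w + (h₁/2 - θ))
    have h4 : |h₁/2 - θ| ≤ h₁/2 := by rw [abs_le]; constructor <;> linarith
    have h3 : |w + (h₁/2 - θ)| ≤ |w| + h₁/2 := by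
      have := abs_add_le w (h₁/2 - θ); linarith
    linarith
  rcases le_or_gt (P/2) |e| with hcase | hcase
  · -- case a : t = c
    refine ⟨c, by linarith, ?_, ?_⟩
    · intro q θ hθ0 hθ1
      have h := fam1 0 0 q θ hθ0 hθ1
      simp only [Int.cast_zero, mul_zero, add_zero, abs_zero] at h
      linarith
    · intro q θ hθ0 hθ1
      have key : c - (ρ₂ + (2*P) * q + θ) = e + (2*P) * ((q₂ - q : ℤ) : ℝ) + (h₂/2 - θ) := by
        push_cast [he]; ring
      rw [key]
      have h4 : |h₂/2 - θ| ≤ h₂/2 := by rw [abs_le]; constructor <;> linarith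
      rcases eq_or_ne q₂ q with rfl | hne
      · simp only [sub_self, Int.cast_zero, mul_zero, add_zero]
        have h2 := lower_abs e (h₂/2 - θ)
        linarith
      · have hm : q₂ - q ≠ 0 := sub_ne_zero.mpr hne
        have h5 : (2*P) ≤ |2*P*((q₂ - q : ℤ):ℝ)| := by
          rw [abs_mul, abs_of_pos (show (0:ℝ) < 2*P by linarith)]
          have h6 : (1:ℝ) ≤ |((q₂ - q : ℤ):ℝ)| := by
            rw [← Int.cast_abs]
            exact_mod_cast Int.one_le_abs hm
          nlinarith
        have h2 := lower_abs (2*P*((q₂ - q : ℤ):ℝ)) (e + (h₂/2 - θ))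
        have h6 : |e + (h₂/2 - θ)| ≤ |e| + h₂/2 := by
          have := abs_add_le e (h₂/2 - θ); linarith
        have heq2 : e + 2*P*((q₂ - q : ℤ):ℝ) + (h₂/2 - θ)
            = 2*P*((q₂ - q : ℤ):ℝ) + (e + (h₂/2 - θ)) := by ring
        rw [heq2]
        linarith
  · -- case b
    set σz : ℤ := if c ≤ x₀ then 1 else -1 with hσz
    obtain ⟨δ, hδ⟩ : ∃ δ : ℝ, δ = P/2 - D - h₂/2 := ⟨_, rfl⟩
    have hδ0 : 0 ≤ δ := by rw [hδ]; linarith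
    have hδP : δ ≤ P/2 := by rw [hδ]; linarith
    set t := c + P * σz - σz * δ with ht
    have hσ1 : (σz:ℝ) = 1 ∨ (σz:ℝ) = -1 := by
      rw [hσz]; split_ifs <;> simp
    have habs : |(σz:ℝ)| = 1 := by rcases hσ1 with h | h <;> rw [h] <;> norm_num
    have hmove : |t - x₀| ≤ P/2 + D + h₂/2 := by
      have hPδ : P - δ = P/2 + D + h₂/2 := by rw [hδ]; ring
      rw [abs_le] at hcx
      rw [abs_le, ht, hσz]
      split_ifs with hcle
      · push_cast
        constructor <;> linarith [hcx.1, hcx.2, hPδ, hδ0]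
      · push_cast
        push_neg at hcle
        constructor <;> linarith [hcx.1, hcx.2, hPδ, hδ0]
    refine ⟨t, hmove, ?_, ?_⟩
    · intro q θ hθ0 hθ1
      have h := fam1 σz (-(σz:ℝ)*δ) q θ hθ0 hθ1
      have hw : |(-(σz:ℝ)*δ)| = δ := by
        rw [abs_mul, abs_neg, habs, one_mul, abs_of_nonneg hδ0]
      rw [hw] at h
      have heq : c + P*σz + (-(σz:ℝ)*δ) = t := by rw [ht]; ring
      rw [heq] at h
      have h9 : P/2 - δ - h₁/2 = D + h₂/2 - h₁/2 := by rw [hδ]; ring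
      linarith
    · intro q θ hθ0 hθ1
      have key : t - (ρ₂ + (2*P) * q + θ)
          = P * ((σz:ℝ) + 2*((q₂ - q : ℤ):ℝ)) + (e + (h₂/2 - θ) - (σz:ℝ)*δ) := by
        rw [ht]; push_cast [he]; ring
      rw [key]
      have h1 := abs_odd_int P (σz:ℝ) (le_of_lt hP) hσ1 (q₂ - q)
      have h2 := lower_abs (P * ((σz:ℝ) + 2*((q₂ - q : ℤ):ℝ))) (e + (h₂/2 - θ) - (σz:ℝ)*δ)
      have h4 : |h₂/2 - θ| ≤ h₂/2 := by rw [abs_le]; constructor <;> linarith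
      have h5 : |(σz:ℝ)*δ| = δ := by rw [abs_mul, habs, one_mul, abs_of_nonneg hδ0]
      have h3 : |e + (h₂/2 - θ) - (σz:ℝ)*δ| ≤ |e| + h₂/2 + δ := by
        have ha := abs_add_le e (h₂/2 - θ)
        have hb' := abs_add_le (e + (h₂/2 - θ)) (-((σz:ℝ)*δ))
        rw [abs_neg, h5] at hb'
        have heq3 : e + (h₂/2 - θ) - (σz:ℝ)*δ = e + (h₂/2 - θ) + -((σz:ℝ)*δ) := by ring
        rw [heq3]
        linarith
      have h7 : P - (|e| + h₂/2 + δ) ≥ D := by rw [hδ]; linarith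
      linarith

-- ### auxiliary lemmas

lemma mFun_le_one {n : ℕ} (x : E n) : mFun x ≤ 1 := by
  unfold mFun; split_ifs with h
  · exact le_refl 1
  · push_neg at h
    rw [inv_le_one_iff₀]; right; linarith

lemma mFun_eq_inv {n : ℕ} {x : E n} (h : 1 < ‖x‖) : mFun x = ‖x‖⁻¹ := by
  unfold mFun; rw [if_neg (by linarith)]

lemma not_mem_plusC {n : ℕ} {α : ℝ} {A : Set (E n)} {z : E n}
    (h : ∀ a ∈ A, α * mFun z ≤ dist z a) : z ∉ plusC n α A := by
  rintro ⟨r, hr0, hrle, w, hwball, hwA⟩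
  have h1 := h w hwA
  have h2 : dist w z < r := mem_ball.mp hwball
  rw [dist_comm] at h2
  linarith

lemma coord_le_dist {n : ℕ} (u v : E n) (k : Fin n) : |u k - v k| ≤ dist u v := by
  rw [EuclideanSpace.dist_eq]
  rw [show |u k - v k| = Real.sqrt ((u k - v k)^2) from (Real.sqrt_sq_eq_abs _).symm]
  apply Real.sqrt_le_sqrt
  have h := Finset.single_le_sum (f := fun i => dist (u i) (v i)^2)
    (fun i _ => sq_nonneg _) (Finset.mem_univ k)
  simpa [Real.dist_eq] using h

lemma coord_le_norm {n : ℕ} (u : E n) (k : Fin n) : |u k| ≤ ‖u‖ := by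
  rw [EuclideanSpace.norm_eq]
  rw [show |u k| = Real.sqrt ((u k)^2) from (Real.sqrt_sq_eq_abs _).symm]
  apply Real.sqrt_le_sqrt
  have h := Finset.single_le_sum (f := fun i => ‖u i‖^2)
    (fun i _ => sq_nonneg _) (Finset.mem_univ k)
  simpa [sq_abs] using h

lemma norm_le_sqrt_mul {n : ℕ} (u : E n) (W : ℝ) (hW : 0 ≤ W) (h : ∀ k, |u k| ≤ W) :
    ‖u‖ ≤ Real.sqrt n * W := by
  rw [EuclideanSpace.norm_eq]
  have h1 : ∑ i, ‖u i‖^2 ≤ ∑ _i : Fin n, W^2 := by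
    apply Finset.sum_le_sum
    intro i _
    have := h i
    have h2 : ‖u i‖ = |u i| := Real.norm_eq_abs _
    nlinarith [abs_nonneg (u i)]
  calc Real.sqrt (∑ i, ‖u i‖^2) ≤ Real.sqrt (∑ _i : Fin n, W^2) := Real.sqrt_le_sqrt h1
  _ = Real.sqrt (n * W^2) := by rw [Finset.sum_const]; simp [mul_comm]
  _ = Real.sqrt n * W := by
      rw [Real.sqrt_mul (Nat.cast_nonneg n), Real.sqrt_sq hW]

lemma layer_upper {n : ℕ} {l : ℕ} (hl : l ≠ 0) {a : E n} (ha : a ∈ layer n l) (k : Fin n) :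
    |a k| ≤ (2:ℝ)^l := by
  unfold layer at ha
  rw [if_neg hl] at ha
  obtain ⟨hbox, -⟩ := ha
  have := hbox k
  rw [mem_Ico] at this
  rw [abs_le]; constructor <;> linarith [this.1, this.2]

lemma layer_lower {n : ℕ} {l : ℕ} (hl : l ≠ 0) {a : E n} (ha : a ∈ layer n l) :
    ∃ k, (2:ℝ)^(l-1) ≤ |a k| := by
  unfold layer at ha
  rw [if_neg hl] at ha
  obtain ⟨-, hnot⟩ := ha
  simp only [mem_setOf_eq, not_forall] at hnot
  obtain ⟨k, hk⟩ := hnot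
  refine ⟨k, ?_⟩
  rw [mem_Ico, not_and_or] at hk
  rcases hk with hk | hk
  · push_neg at hk
    rw [le_abs]; right; linarith
  · push_neg at hk
    rw [le_abs]; left; exact hk

lemma cube_coord {n : ℕ} {l : ℕ} {v : Fin n → ℤ} {a : E n}
    (ha : a ∈ dyadicCube n l v) (k : Fin n) {K r0 : ℤ} (hK : 0 < K)
    (hlab : v k % K = r0) (u : ℝ) (hu : u = (2:ℝ)^(-(l:ℤ))) :
    ∃ (q : ℤ) (θ : ℝ), 0 ≤ θ ∧ θ ≤ u ∧ a k = (r0:ℝ)*u + ((K:ℝ)*u)*q + θ := by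
  have hak := ha k
  rw [mem_Ico] at hak
  refine ⟨v k / K, a k - (2:ℝ)^(-(l:ℤ)) * v k, by linarith [hak.1], ?_, ?_⟩
  · have hexp : (2:ℝ)^(-(l:ℤ)) * ((v k : ℝ) + 1) = (2:ℝ)^(-(l:ℤ)) * (v k:ℝ) + (2:ℝ)^(-(l:ℤ)) := by
      ring
    rw [hu]
    have := hak.2
    rw [show ((v k : ℤ):ℝ) + 1 = ((v k : ℝ) + 1) from by push_cast; ring] at this
    linarith [hexp ▸ this]
  · have hdiv : (K:ℝ) * ((v k / K : ℤ):ℝ) + (r0:ℝ) = ((v k : ℤ):ℝ) := by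
      have h0 := Int.mul_ediv_add_emod (v k) K
      rw [hlab] at h0
      exact_mod_cast congrArg (fun z : ℤ => (z : ℝ)) h0
    rw [hu]
    have : (r0:ℝ)*(2:ℝ)^(-(l:ℤ)) + (((K:ℝ))*(2:ℝ)^(-(l:ℤ)))*((v k / K : ℤ):ℝ)
        = (2:ℝ)^(-(l:ℤ)) * ((K:ℝ) * ((v k / K : ℤ):ℝ) + (r0:ℝ)) := by ring
    rw [this, hdiv]
    ring


section numeric
variable {π L W D : ℝ}

lemma NI1 (hπ : 4 ≤ π) (hL : 4*π ≤ L) (hD : D ≤ 2*π/(L-10)) (hD0 : 0 ≤ D) :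
    D + (2/L)/2 ≤ (16*π/L)/2 := by
  have hL16 : (16:ℝ) ≤ L := by linarith
  have hLpos : (0:ℝ) < L := by linarith
  have h10 : (0:ℝ) < L - 10 := by linarith
  have key : 2*π/(L-10) + 1/L ≤ 8*π/L := by
    rw [← sub_nonneg]
    have heq : 8*π/L - (2*π/(L-10) + 1/L) = (6*π*L - 80*π - L + 10) / (L*(L-10)) := by
      field_simp; ring
    rw [heq]
    apply div_nonneg _ (by positivity)
    nlinarith
  calc D + (2/L)/2 = D + 1/L := by ring
  _ ≤ 2*π/(L-10) + 1/L := by linarith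
  _ ≤ 8*π/L := key
  _ = (16*π/L)/2 := by ring

lemma NI3 (hπ : 4 ≤ π) (hL : 4*π ≤ L) (hD : D ≤ 4/3) (hD0 : 0 ≤ D) :
    8*π/L + D + 1/L ≤ 4 := by
  have hL16 : (16:ℝ) ≤ L := by linarith
  have hLpos : (0:ℝ) < L := by linarith
  have h1 : 8*π/L ≤ 2 := by rw [div_le_iff₀ hLpos]; nlinarith
  have h2 : 1/L ≤ 1/16 := by rw [div_le_div_iff₀ hLpos (by norm_num)]; linarith
  linarith

lemma NI2 (hπ : 4 ≤ π) (hL : 4*π ≤ L) (hW1 : L/2 - 1 ≤ W) (hW3 : W ≤ 3*L/4)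
    (hD : D ≤ π/(W-4)) (hD0 : 0 ≤ D) :
    8*π/L + D + 1/L ≤ 8*π/W := by
  have hL16 : (16:ℝ) ≤ L := by linarith
  have hLpos : (0:ℝ) < L := by linarith
  have hW4 : (4:ℝ) < W := by linarith
  have hWpos : (0:ℝ) < W := by linarith
  have hLne : L ≠ 0 := ne_of_gt hLpos
  have hWne : W ≠ 0 := ne_of_gt hWpos
  have hW4ne : W - 4 ≠ 0 := ne_of_gt (by linarith)
  have key : 8*π/L + π/(W-4) + 1/L ≤ 8*π/W := by
    rw [← sub_nonneg]
    have heq : 8*π/W - (8*π/L + π/(W-4) + 1/L)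
        = (8*π*L*(W-4) - (8*π+1)*(W*(W-4)) - π*L*W) / (L*W*(W-4)) := by
      field_simp
      ring
    rw [heq]
    apply div_nonneg _ (le_of_lt (mul_pos (mul_pos hLpos hWpos) (by linarith : (0:ℝ) < W-4)))
    have hA : 0 ≤ (8*π+1)*((W-(L/2-1))*(3*L/4-W)) :=
      mul_nonneg (by linarith) (mul_nonneg (by linarith) (by linarith))
    have hκ : -3*π*L - (5/4)*L + 40*π + 5 ≤ 0 := by nlinarith
    have hW' : (-3*π*L - (5/4)*L + 40*π + 5) * (3*L/4) ≤ (-3*π*L - (5/4)*L + 40*π + 5) * W :=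
      mul_le_mul_of_nonpos_left hW3 hκ
    have hT : 0 ≤ (3*π/4 - 9/16)*L*L + (3 - 8*π)*L := by
      nlinarith [mul_nonneg (mul_nonneg (by linarith : (0:ℝ) ≤ 3*π/4 - 9/16) (by linarith : (0:ℝ) ≤ L - 16)) (by linarith : (0:ℝ) ≤ L), mul_nonneg (by linarith : (0:ℝ) ≤ π) (by linarith : (0:ℝ) ≤ L)]
    nlinarith [hA, hW', hT]
  linarith

lemma NI4 (hπ : 4 ≤ π) (hL : 4*π ≤ L) (hW1 : L/2 - 1 ≤ W) (hW3 : W ≤ 3*L/4)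
    (hD : D ≤ π/(W-4)) (hD0 : 0 ≤ D) :
    (8*π/L + D + 1/L) + D ≤ L - W := by
  have hL16 : (16:ℝ) ≤ L := by linarith
  have hLpos : (0:ℝ) < L := by linarith
  have hW4 : (4:ℝ) < W := by linarith
  have hLne : L ≠ 0 := ne_of_gt hLpos
  have hW4ne : W - 4 ≠ 0 := ne_of_gt (by linarith)
  have key : 8*π/L + 2*(π/(W-4)) + 1/L ≤ L - W := by
    rw [← sub_nonneg]
    have heq : L - W - (8*π/L + 2*(π/(W-4)) + 1/L)
        = ((L-W)*(L*(W-4)) - (8*π+1)*(W-4) - 2*π*L) / (L*(W-4)) := by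
      field_simp
      ring
    rw [heq]
    apply div_nonneg _ (le_of_lt (mul_pos hLpos (by linarith : (0:ℝ) < W-4)))
    have hA : 0 ≤ L*((W-(L/2-1))*(3*L/4-W)) :=
      mul_nonneg (by linarith) (mul_nonneg (by linarith) (by linarith))
    have hκ : -(1/4)*L*L + 5*L - 8*π - 1 ≤ 0 := by nlinarith
    have hW' : (-(1/4)*L*L + 5*L - 8*π - 1) * (3*L/4) ≤ (-(1/4)*L*L + 5*L - 8*π - 1) * W :=
      mul_le_mul_of_nonpos_left hW3 hκ
    have hT : 0 ≤ (3/16)*L*L*L - L*L - 8*π*L - (3/4)*L + 32*π + 4 := by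
      nlinarith [mul_nonneg (mul_nonneg (by linarith : (0:ℝ) ≤ L - 16) (by linarith : (0:ℝ) ≤ L - 16)) (by linarith : (0:ℝ) ≤ L),
        mul_nonneg (mul_nonneg (by linarith : (0:ℝ) ≤ L - 4*π) (by linarith : (0:ℝ) ≤ L - 16)) (by linarith : (0:ℝ) ≤ L),
        mul_nonneg (mul_nonneg (by linarith : (0:ℝ) ≤ L - 4*π) (by linarith : (0:ℝ) ≤ L)) (by linarith : (0:ℝ) ≤ L),
        mul_nonneg (by linarith : (0:ℝ) ≤ L - 16) (by linarith : (0:ℝ) ≤ L),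
        mul_nonneg (by linarith : (0:ℝ) ≤ π) (by linarith : (0:ℝ) ≤ L - 16)]
    nlinarith [hA, hW', hT]
  linarith

lemma NO1 (hπ : 4 ≤ π) (hL : 4*π ≤ L) (hW3 : 3*L/4 ≤ W) (hD : D ≤ π/(W-4)) (hD0 : 0 ≤ D) :
    D + (1/L)/2 ≤ (8*π/L)/2 := by
  have hL16 : (16:ℝ) ≤ L := by linarith
  have hLpos : (0:ℝ) < L := by linarith
  have hW4 : (4:ℝ) < W := by nlinarith
  have h1 : π/(W-4) ≤ 2*π/L := by
    rw [div_le_div_iff₀ (by linarith) hLpos]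
    nlinarith
  have h2 : 1/(2*L) ≤ π/L := by
    rw [div_le_div_iff₀ (by linarith) hLpos]
    nlinarith
  calc D + (1/L)/2 ≤ 2*π/L + 1/(2*L) := by linarith [div_div (1:ℝ) L 2, (by ring : (1/L)/2 = 1/(2*L))]
  _ ≤ 2*π/L + π/L := by linarith
  _ ≤ (8*π/L)/2 := by rw [← sub_nonneg]; have : (8*π/L)/2 - (2*π/L + π/L) = π/L := by ring
                      rw [this]; positivity

lemma NO3 (hπ : 4 ≤ π) (hL : 4*π ≤ L) (hD : D ≤ 4/3) (hD0 : 0 ≤ D) :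
    4*π/L + D + (1/L)/2 ≤ 4 := by
  have hL16 : (16:ℝ) ≤ L := by linarith
  have hLpos : (0:ℝ) < L := by linarith
  have h1 : 4*π/L ≤ 1 := by rw [div_le_iff₀ hLpos]; nlinarith
  have h2 : (1/L)/2 ≤ 1 := by
    have : 1/L ≤ 1 := by rw [div_le_iff₀ hLpos]; linarith
    linarith
  linarith

lemma NO2 (hπ : 4 ≤ π) (hL : 4*π ≤ L) (hW3 : 3*L/4 ≤ W) (hW2 : W ≤ L + 1)
    (hD : D ≤ π/(W-4)) (hD0 : 0 ≤ D) :
    4*π/L + D + (1/L)/2 ≤ 8*π/W := by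
  have hL16 : (16:ℝ) ≤ L := by linarith
  have hLpos : (0:ℝ) < L := by linarith
  have hW4 : (4:ℝ) < W := by nlinarith
  have hWpos : (0:ℝ) < W := by linarith
  have hLne : L ≠ 0 := ne_of_gt hLpos
  have hWne : W ≠ 0 := ne_of_gt hWpos
  have hW4ne : W - 4 ≠ 0 := ne_of_gt (by linarith)
  have key : 4*π/L + π/(W-4) + 1/(2*L) ≤ 8*π/W := by
    rw [← sub_nonneg]
    have heq : 8*π/W - (4*π/L + π/(W-4) + 1/(2*L))
        = (8*π*(2*L)*(W-4) - (8*π+1)*(W*(W-4)) - 2*π*L*W) / ((2*L)*W*(W-4)) := by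
      field_simp
      ring
    rw [heq]
    apply div_nonneg _ (le_of_lt (mul_pos (mul_pos (by linarith : (0:ℝ) < 2*L) hWpos) (by linarith : (0:ℝ) < W-4)))
    have hA : 0 ≤ (8*π+1)*((W-3*L/4)*(L+1-W)) :=
      mul_nonneg (by linarith) (mul_nonneg (by linarith) (by linarith))
    rcases le_total (24*π + 3) (7*L/4) with hb | hb
    · have hW' : (24*π + 3 - 7*L/4) * (L+1) ≤ (24*π + 3 - 7*L/4) * W :=
        mul_le_mul_of_nonpos_left hW2 (by linarith)
      have hT : 0 ≤ 6*π*L*L - L*L - 34*π*L + 2*L + 24*π + 3 := by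
        nlinarith [mul_nonneg (by linarith : (0:ℝ) ≤ L - 4*π) (by linarith : (0:ℝ) ≤ L), mul_nonneg (by linarith : (0:ℝ) ≤ π) (by linarith : (0:ℝ) ≤ L - 16), mul_nonneg (mul_nonneg (by linarith : (0:ℝ) ≤ π) (by linarith : (0:ℝ) ≤ L - 16)) (by linarith : (0:ℝ) ≤ L)]
      nlinarith [hA, hW', hT]
    · have hW' : 0 ≤ (24*π + 3 - 7*L/4) * W := mul_nonneg (by linarith) (by linarith)
      have hT : 0 ≤ 6*π*L*L + (3/4)*L*L - 58*π*L + (3/4)*L := by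
        nlinarith [mul_nonneg (by linarith : (0:ℝ) ≤ π) (by linarith : (0:ℝ) ≤ L - 16), mul_nonneg (mul_nonneg (by linarith : (0:ℝ) ≤ π) (by linarith : (0:ℝ) ≤ L - 16)) (by linarith : (0:ℝ) ≤ L)]
      nlinarith [hA, hW', hT]
  have h3 : (1/L)/2 = 1/(2*L) := by ring
  linarith

lemma NO4 (hπ : 4 ≤ π) (hL : 4*π ≤ L) (hW3 : 3*L/4 ≤ W) (hW2 : W ≤ L + 1)
    (hD : D ≤ π/(W-4)) (hD0 : 0 ≤ D) :
    (4*π/L + D + (1/L)/2) + D ≤ W - L/2 := by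
  have hL16 : (16:ℝ) ≤ L := by linarith
  have hLpos : (0:ℝ) < L := by linarith
  have hW4 : (4:ℝ) < W := by nlinarith
  have hLne : L ≠ 0 := ne_of_gt hLpos
  have hW4ne : W - 4 ≠ 0 := ne_of_gt (by linarith)
  have key : 4*π/L + 2*(π/(W-4)) + 1/(2*L) ≤ W - L/2 := by
    rw [← sub_nonneg]
    have heq : W - L/2 - (4*π/L + 2*(π/(W-4)) + 1/(2*L))
        = ((W-L/2)*(2*L*(W-4)) - 8*π*(W-4) - 4*π*L - (W-4)) / (2*L*(W-4)) := by
      field_simp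
      ring
    rw [heq]
    apply div_nonneg _ (le_of_lt (mul_pos (by linarith : (0:ℝ) < 2*L) (by linarith : (0:ℝ) < W-4)))
    have hinc : 0 ≤ (W - 3*L/4) * (2*L*W + L*L/2 - 8*L - 8*π - 1) := by
      apply mul_nonneg (by linarith)
      nlinarith [mul_nonneg (by linarith : (0:ℝ) ≤ L) (by linarith : (0:ℝ) ≤ W - 3*L/4), mul_nonneg (by linarith : (0:ℝ) ≤ L - 4*π) (by linarith : (0:ℝ) ≤ L), mul_nonneg (by linarith : (0:ℝ) ≤ L - 16) (by linarith : (0:ℝ) ≤ L)]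
    have hQs : 0 ≤ (3/8)*L*L*L - 2*L*L - 10*π*L - (3/4)*L + 32*π + 4 := by
      nlinarith [mul_nonneg (mul_nonneg (by linarith : (0:ℝ) ≤ L - 16) (by linarith : (0:ℝ) ≤ L - 16)) (by linarith : (0:ℝ) ≤ L),
        mul_nonneg (mul_nonneg (by linarith : (0:ℝ) ≤ L - 4*π) (by linarith : (0:ℝ) ≤ L - 16)) (by linarith : (0:ℝ) ≤ L),
        mul_nonneg (mul_nonneg (by linarith : (0:ℝ) ≤ L - 4*π) (by linarith : (0:ℝ) ≤ L)) (by linarith : (0:ℝ) ≤ L),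
        mul_nonneg (by linarith : (0:ℝ) ≤ L - 16) (by linarith : (0:ℝ) ≤ L),
        mul_nonneg (by linarith : (0:ℝ) ≤ π) (by linarith : (0:ℝ) ≤ L - 16)]
    nlinarith [hinc, hQs]
  have h3 : (1/L)/2 = 1/(2*L) := by ring
  linarith

end numeric

end auxLemmas

/-- For `p ≥ 2` and `i ∈ {1,…,2^{p+4}}ⁿ`, the set `A_p^{(i)} + 𝓒_{2^p}` is
`2^{p+3}√n`-admissible Whitney. -/
theorem stmt7 (n : ℕ) (hn : 1 ≤ n) (p : ℕ) (hp : 2 ≤ p)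
    (i : Fin n → ℤ) (hi : ∀ j, 1 ≤ i j ∧ i j ≤ 2 ^ (p + 4)) :
    AdmWhitney n (2 ^ (p + 3) * Real.sqrt n) (plusC n (2 ^ p) (Ap n p i)) := by
  intro x hx
  obtain ⟨r, hr0, hrle, w, hwball, hwA⟩ := hx
  simp only [Ap, mem_iUnion] at hwA
  obtain ⟨l, hl, v, hsub, hlab, haw⟩ := hwA
  set π := (2:ℝ)^p with hπdef
  set L := (2:ℝ)^l with hLdef
  have hπpos : (0:ℝ) < π := by rw [hπdef]; positivity
  have hπ4 : (4:ℝ) ≤ π := by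
    rw [hπdef, show (4:ℝ) = 2^2 from by norm_num]
    exact pow_le_pow_right₀ one_le_two hp
  have hL4π : 4*π ≤ L := by
    rw [hπdef, hLdef, show 4*(2:ℝ)^p = 2^(p+2) from by rw [pow_add]; ring]
    exact pow_le_pow_right₀ one_le_two hl
  have hL16 : (16:ℝ) ≤ L := by linarith
  have hLpos : (0:ℝ) < L := by linarith
  have hwlayer : w ∈ layer n l := hsub haw
  have hlne : l ≠ 0 := by omega
  obtain ⟨k₀, hk₀⟩ := layer_lower hlne hwlayer
  have hhalf : (2:ℝ)^(l-1) = L/2 := by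
    have h1 : (2:ℝ)^(l-1) * 2 = L := by
      rw [hLdef, ← pow_succ]; congr 1; omega
    linarith
  have hk₀' : L/2 ≤ |w k₀| := by rw [← hhalf]; exact hk₀
  have hupperw : ∀ k, |w k| ≤ L := fun k => layer_upper hlne hwlayer k
  -- dist x w facts
  have hmpos : 0 < mFun x := by
    unfold mFun; split_ifs with h
    · norm_num
    · push_neg at h; positivity
  have hdxw : dist x w < π * mFun x := by
    have h2 : dist w x < r := mem_ball.mp hwball
    rw [dist_comm] at h2
    exact lt_of_lt_of_le h2 hrle
  have hdxwπ : dist x w < π := by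
    nlinarith [mFun_le_one x]
  have hcw : |w k₀| - |x k₀| ≤ dist x w := by
    have h1 := abs_sub_abs_le_abs_sub (w k₀) (x k₀)
    have h2 := coord_le_dist w x k₀
    rw [dist_comm] at h2
    linarith
  set ξ := ‖x‖ with hξdef
  have hξk : ∀ k, |x k| ≤ ξ := fun k => coord_le_norm x k
  have hξ14 : L/4 ≤ ξ := by
    have := hξk k₀
    linarith
  have hξgt1 : 1 < ξ := by linarith
  have hξpos : 0 < ξ := by linarith
  have hmx : mFun x = ξ⁻¹ := mFun_eq_inv hξgt1
  have hdxw2 : dist x w < π * ξ⁻¹ := by rw [← hmx]; exact hdxw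
  have hπξinv : π * ξ⁻¹ ≤ 1 := by
    rw [mul_inv_le_iff₀ hξpos, one_mul]; linarith
  have hdxw1 : dist x w ≤ 1 := le_trans hdxw2.le hπξinv
  have hξlow : L/2 - 1 ≤ ξ := by
    have := hξk k₀; linarith
  obtain ⟨kW, -, hkW'⟩ := Finset.exists_max_image Finset.univ (fun k => |x k|)
    ⟨⟨0, hn⟩, Finset.mem_univ _⟩
  have hkW : ∀ j, |x j| ≤ |x kW| := fun j => hkW' j (Finset.mem_univ _)
  set W := |x kW| with hWdef
  have hWlow : L/2 - 1 ≤ W := le_trans (by linarith [hkW k₀]) (le_refl _)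
  have hWhi : W ≤ L + 1 := by
    have h1 := abs_sub_abs_le_abs_sub (x kW) (w kW)
    have h2 := coord_le_dist x w kW
    have := hupperw kW
    linarith
  have hWξ : W ≤ ξ := hξk kW
  have hW0 : 0 ≤ W := abs_nonneg _
  have hξW : ξ ≤ Real.sqrt n * W := norm_le_sqrt_mul x W hW0 hkW
  have hW7 : 7 ≤ W := by linarith
  have hξ43 : 3 ≤ ξ - 4 := by linarith
  set D := π/(ξ-4) with hDdef
  have hD0 : 0 ≤ D := by rw [hDdef]; positivity
  have hDW : D ≤ π/(W-4) := by
    rw [hDdef, div_le_div_iff₀ (by linarith) (by linarith)]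
    nlinarith
  have hD43 : D ≤ 4/3 := by
    rw [hDdef, div_le_iff₀ (by linarith)]
    nlinarith
  have hD10 : D ≤ 2*π/(L-10) := by
    rw [hDdef, div_le_div_iff₀ (by linarith) (by linarith)]
    nlinarith
  set j₀ : Fin n := ⟨0, hn⟩ with hj₀def
  set r0 : ℤ := i j₀ - 1 with hr0def
  have hKpos : (0:ℤ) < 2^(p+4) := by positivity
  have hK16 : (((2:ℤ)^(p+4) : ℤ) : ℝ) = 16*π := by
    push_cast
    rw [hπdef, pow_add]
    norm_num
    try ring
  have hlabr : ∀ (v' : Fin n → ℤ), (∀ j, v' j % (2^(p+4):ℤ) + 1 = i j) →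
      v' j₀ % (2^(p+4):ℤ) = r0 := by
    intro v' hv; have := hv j₀; omega
  have hinvl : ((2:ℝ)^(-(l:ℤ))) = 1/L := by
    rw [zpow_neg, zpow_natCast, one_div, hLdef]
  -- final glue, parameterized
  have hfinal : ∀ y : E n, y ∉ plusC n (2^p) (Ap n p i) → dist x y ≤ 8*π/W →
      infDist x (plusC n (2^p) (Ap n p i))ᶜ ≤ 2^(p+3) * Real.sqrt n * mFun x := by
    intro y hynot hyb
    have hmem : y ∈ (plusC n (2^p) (Ap n p i))ᶜ := hynot
    have h1 : infDist x (plusC n (2^p) (Ap n p i))ᶜ ≤ dist x y := infDist_le_dist_of_mem hmem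
    have hsqn : 0 < Real.sqrt n := Real.sqrt_pos.mpr (by exact_mod_cast hn)
    have h2 : 8*π/W ≤ 8*π*Real.sqrt n/ξ := by
      rw [div_le_div_iff₀ (by linarith) hξpos]
      nlinarith
    have h3 : 8*π*Real.sqrt n/ξ = 2^(p+3) * Real.sqrt n * mFun x := by
      have h8 : ((2:ℝ)^(p+3)) = 8*π := by rw [hπdef, pow_add]; norm_num; try ring
      rw [hmx, h8, div_eq_mul_inv]
      try ring
    linarith

  by_cases hcase : W ≤ 3*L/4
  · -- INNER case
    have hgap : D + (2/L)/2 ≤ (16*π/L)/2 := NI1 hπ4 hL4π hD10 hD0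
    obtain ⟨t, hmove, hfam1, hfam2⟩ := oneDim (16*π/L) (1/L) (2/L) D (x j₀)
      ((r0:ℝ)*(1/L)) ((r0:ℝ)*(2/L)) (by positivity) (by positivity)
      (by rw [div_le_div_iff₀ hLpos hLpos]; nlinarith) hD0 hgap
    set y : E n := WithLp.toLp 2 (fun k => if k = j₀ then t else x k) with hydef
    have hyj : y j₀ = t := by simp [hydef]
    have hyk : ∀ k, k ≠ j₀ → y k = x k := by intro k hk; simp [hydef, hk]
    have hdxy : dist x y = |x j₀ - t| := by
      rw [EuclideanSpace.dist_eq]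
      rw [Finset.sum_eq_single_of_mem j₀ (Finset.mem_univ _)
        (fun k _ hk => by rw [hyk k hk]; simp)]
      rw [hyj, Real.dist_eq, Real.sqrt_sq_eq_abs, abs_abs]
    have hM : dist x y ≤ 8*π/L + D + 1/L := by
      rw [hdxy, abs_sub_comm]
      have hh : (16*π/L)/2 + D + (2/L)/2 = 8*π/L + D + 1/L := by ring
      linarith
    have hM4 : dist x y ≤ 4 := le_trans hM (NI3 hπ4 hL4π hD43 hD0)
    have hyξ : ξ - 4 ≤ ‖y‖ := by
      have h1 : ξ - ‖y‖ ≤ dist x y := by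
        have h2 := norm_sub_norm_le x y
        rw [← dist_eq_norm] at h2
        linarith
      linarith
    have hy1 : 1 < ‖y‖ := by linarith
    have hmy : π * mFun y ≤ D := by
      rw [mFun_eq_inv hy1, hDdef, ← div_eq_mul_inv,
        div_le_div_iff₀ (by linarith) (by linarith)]
      nlinarith
    have hynot : y ∉ plusC n (2^p) (Ap n p i) := by
      apply not_mem_plusC
      intro a ha
      simp only [Ap, mem_iUnion] at ha
      obtain ⟨l', hl', v', hsub', hlab', hav'⟩ := ha
      have halayer : a ∈ layer n l' := hsub' hav'
      have hl'ne : l' ≠ 0 := by omega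
      have hgd : D ≤ dist y a → π * mFun y ≤ dist y a := fun h => le_trans hmy h
      have htri : dist x a - dist x y ≤ dist y a := by
        have h0 := dist_triangle x y a
        linarith
      rcases show l' + 2 ≤ l ∨ l' + 1 = l ∨ l' = l ∨ l' = l + 1 ∨ l + 2 ≤ l' from by omega
        with hc | hc | hc | hc | hc
      · -- far below
        apply hgd
        have hLP : 16*π ≤ L := by
          rw [hLdef, hπdef, show (16:ℝ)*2^p = 2^(p+4) from by rw [pow_add]; norm_num [mul_comm]]
          exact pow_le_pow_right₀ one_le_two (by omega)
        have h2 : (2:ℝ)^l' * 4 ≤ L := by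
          rw [hLdef]
          calc (2:ℝ)^l' * 4 = 2^(l'+2) := by rw [pow_add]; norm_num
          _ ≤ 2^l := pow_le_pow_right₀ one_le_two (by omega)
        have hup := layer_upper hl'ne halayer k₀
        have hsep : L/4 - 1 ≤ dist x a := by
          have h1 := coord_le_dist x a k₀
          have h3 := abs_sub_abs_le_abs_sub (x k₀) (a k₀)
          have h4 : L/2 - 1 ≤ |x k₀| := by linarith
          linarith
        linarith
      · -- l' = l-1 : lattice family 2
        apply hgd
        have hinv' : ((2:ℝ)^(-(l':ℤ))) = 2/L := by
          rw [zpow_neg, zpow_natCast,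
            show (2:ℝ)^l' = L/2 from by rw [← hhalf]; congr 1; omega, inv_div]
        obtain ⟨q, θ, hθ0, hθ1, heq⟩ :=
          cube_coord hav' j₀ hKpos (hlabr v' hlab') (2/L) hinv'.symm
        have hperiod : (((2:ℤ)^(p+4) : ℤ):ℝ)*(2/L) = 2*(16*π/L) := by rw [hK16]; ring
        rw [hperiod] at heq
        have h1 := hfam2 q θ hθ0 hθ1
        have h2 : D ≤ |t - a j₀| := by rw [heq]; exact h1
        have h3 := coord_le_dist y a j₀
        rw [hyj] at h3
        linarith
      · -- l' = l : lattice family 1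
        apply hgd
        have hinv'' : ((2:ℝ)^(-(l':ℤ))) = 1/L := by rw [hc]; exact hinvl
        obtain ⟨q, θ, hθ0, hθ1, heq⟩ :=
          cube_coord hav' j₀ hKpos (hlabr v' hlab') (1/L) hinv''.symm
        have hperiod : (((2:ℤ)^(p+4) : ℤ):ℝ)*(1/L) = 16*π/L := by rw [hK16]; ring
        rw [hperiod] at heq
        have h1 := hfam1 q θ hθ0 hθ1
        have h2 : D ≤ |t - a j₀| := by rw [heq]; exact h1
        have h3 := coord_le_dist y a j₀
        rw [hyj] at h3
        linarith
      · -- l' = l+1 : separation above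
        apply hgd
        obtain ⟨k, hk⟩ := layer_lower hl'ne halayer
        have hk2 : L ≤ |a k| := by
          rw [show l' - 1 = l from by omega] at hk
          rw [hLdef]; exact hk
        have hsep : L - W ≤ dist x a := by
          have h1 := coord_le_dist x a k
          have h2 := abs_sub_abs_le_abs_sub (a k) (x k)
          have h3 := hkW k
          rw [abs_sub_comm] at h1
          linarith
        have h4 := NI4 hπ4 hL4π hWlow hcase hDW hD0
        linarith
      · -- far above
        apply hgd
        obtain ⟨k, hk⟩ := layer_lower hl'ne halayer
        have hk2 : 2*L ≤ |a k| := by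
          have h1 : (2:ℝ)^(l+1) ≤ 2^(l'-1) := pow_le_pow_right₀ one_le_two (by omega)
          rw [show (2:ℝ)^(l+1) = 2*L from by rw [hLdef, pow_succ]; ring] at h1
          linarith
        have hsep : 2*L - (L+1) ≤ dist x a := by
          have h1 := coord_le_dist x a k
          have h2 := abs_sub_abs_le_abs_sub (a k) (x k)
          rw [abs_sub_comm] at h1
          have h3 : |x k| ≤ L + 1 := le_trans (hkW k) hWhi
          linarith
        linarith
    have hB : dist x y ≤ 8*π/W := le_trans hM (NI2 hπ4 hL4π hWlow hcase hDW hD0)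
    exact hfinal y hynot hB
  · -- OUTER case
    push_neg at hcase
    have hcase' : 3*L/4 ≤ W := le_of_lt hcase
    have hgap : D + (1/L)/2 ≤ (8*π/L)/2 := NO1 hπ4 hL4π hcase' hDW hD0
    obtain ⟨t, hmove, hfam1, hfam2⟩ := oneDim (8*π/L) (1/(2*L)) (1/L) D (x j₀)
      ((r0:ℝ)*(1/(2*L))) ((r0:ℝ)*(1/L)) (by positivity) (by positivity)
      (by rw [div_le_div_iff₀ (by linarith) hLpos]; nlinarith) hD0 hgap
    set y : E n := WithLp.toLp 2 (fun k => if k = j₀ then t else x k) with hydef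
    have hyj : y j₀ = t := by simp [hydef]
    have hyk : ∀ k, k ≠ j₀ → y k = x k := by intro k hk; simp [hydef, hk]
    have hdxy : dist x y = |x j₀ - t| := by
      rw [EuclideanSpace.dist_eq]
      rw [Finset.sum_eq_single_of_mem j₀ (Finset.mem_univ _)
        (fun k _ hk => by rw [hyk k hk]; simp)]
      rw [hyj, Real.dist_eq, Real.sqrt_sq_eq_abs, abs_abs]
    have hM : dist x y ≤ 4*π/L + D + (1/L)/2 := by
      rw [hdxy, abs_sub_comm]
      have hh : (8*π/L)/2 + D + (1/L)/2 = 4*π/L + D + (1/L)/2 := by ring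
      linarith
    have hM4 : dist x y ≤ 4 := le_trans hM (NO3 hπ4 hL4π hD43 hD0)
    have hyξ : ξ - 4 ≤ ‖y‖ := by
      have h1 : ξ - ‖y‖ ≤ dist x y := by
        have h2 := norm_sub_norm_le x y
        rw [← dist_eq_norm] at h2
        linarith
      linarith
    have hy1 : 1 < ‖y‖ := by linarith
    have hmy : π * mFun y ≤ D := by
      rw [mFun_eq_inv hy1, hDdef, ← div_eq_mul_inv,
        div_le_div_iff₀ (by linarith) (by linarith)]
      nlinarith
    have hynot : y ∉ plusC n (2^p) (Ap n p i) := by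
      apply not_mem_plusC
      intro a ha
      simp only [Ap, mem_iUnion] at ha
      obtain ⟨l', hl', v', hsub', hlab', hav'⟩ := ha
      have halayer : a ∈ layer n l' := hsub' hav'
      have hl'ne : l' ≠ 0 := by omega
      have hgd : D ≤ dist y a → π * mFun y ≤ dist y a := fun h => le_trans hmy h
      have htri : dist x a - dist x y ≤ dist y a := by
        have h0 := dist_triangle x y a
        linarith
      rcases show l' + 2 ≤ l ∨ l' + 1 = l ∨ l' = l ∨ l' = l + 1 ∨ l + 2 ≤ l' from by omega
        with hc | hc | hc | hc | hc
      · -- far below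
        apply hgd
        have hLP : 16*π ≤ L := by
          rw [hLdef, hπdef, show (16:ℝ)*2^p = 2^(p+4) from by rw [pow_add]; norm_num [mul_comm]]
          exact pow_le_pow_right₀ one_le_two (by omega)
        have h2 : (2:ℝ)^l' * 4 ≤ L := by
          rw [hLdef]
          calc (2:ℝ)^l' * 4 = 2^(l'+2) := by rw [pow_add]; norm_num
          _ ≤ 2^l := pow_le_pow_right₀ one_le_two (by omega)
        have hup := layer_upper hl'ne halayer k₀
        have hsep : L/4 - 1 ≤ dist x a := by
          have h1 := coord_le_dist x a k₀
          have h3 := abs_sub_abs_le_abs_sub (x k₀) (a k₀)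
          have h4 : L/2 - 1 ≤ |x k₀| := by linarith
          linarith
        linarith
      · -- l' = l-1 : separation below
        apply hgd
        have hup : ∀ k, |a k| ≤ L/2 := by
          intro k
          have h1 := layer_upper hl'ne halayer k
          rw [show (2:ℝ)^l' = L/2 from by rw [← hhalf]; congr 1; omega] at h1
          exact h1
        have hsep : W - L/2 ≤ dist x a := by
          have h1 := coord_le_dist x a kW
          have h2 := abs_sub_abs_le_abs_sub (x kW) (a kW)
          have h3 := hup kW
          linarith
        have h4 := NO4 hπ4 hL4π hcase' hWhi hDW hD0
        linarith
      · -- l' = l : lattice family 2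
        apply hgd
        have hinv'' : ((2:ℝ)^(-(l':ℤ))) = 1/L := by rw [hc]; exact hinvl
        obtain ⟨q, θ, hθ0, hθ1, heq⟩ :=
          cube_coord hav' j₀ hKpos (hlabr v' hlab') (1/L) hinv''.symm
        have hperiod : (((2:ℤ)^(p+4) : ℤ):ℝ)*(1/L) = 2*(8*π/L) := by rw [hK16]; ring
        rw [hperiod] at heq
        have h1 := hfam2 q θ hθ0 hθ1
        have h2 : D ≤ |t - a j₀| := by rw [heq]; exact h1
        have h3 := coord_le_dist y a j₀
        rw [hyj] at h3
        linarith
      · -- l' = l+1 : lattice family 1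
        apply hgd
        have hinv' : ((2:ℝ)^(-(l':ℤ))) = 1/(2*L) := by
          rw [zpow_neg, zpow_natCast,
            show (2:ℝ)^l' = 2*L from by rw [hLdef, hc, pow_succ]; ring]
          rw [one_div]
        obtain ⟨q, θ, hθ0, hθ1, heq⟩ :=
          cube_coord hav' j₀ hKpos (hlabr v' hlab') (1/(2*L)) hinv'.symm
        have hperiod : (((2:ℤ)^(p+4) : ℤ):ℝ)*(1/(2*L)) = 8*π/L := by
          rw [hK16]; field_simp; ring
        rw [hperiod] at heq
        have h1 := hfam1 q θ hθ0 hθ1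
        have h2 : D ≤ |t - a j₀| := by rw [heq]; exact h1
        have h3 := coord_le_dist y a j₀
        rw [hyj] at h3
        linarith
      · -- far above
        apply hgd
        obtain ⟨k, hk⟩ := layer_lower hl'ne halayer
        have hk2 : 2*L ≤ |a k| := by
          have h1 : (2:ℝ)^(l+1) ≤ 2^(l'-1) := pow_le_pow_right₀ one_le_two (by omega)
          rw [show (2:ℝ)^(l+1) = 2*L from by rw [hLdef, pow_succ]; ring] at h1
          linarith
        have hsep : 2*L - (L+1) ≤ dist x a := by
          have h1 := coord_le_dist x a k
          have h2 := abs_sub_abs_le_abs_sub (a k) (x k)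
          rw [abs_sub_comm] at h1
          have h3 : |x k| ≤ L + 1 := le_trans (hkW k) hWhi
          linarith
        linarith
    have hB : dist x y ≤ 8*π/W := le_trans hM (NO2 hπ4 hL4π hcase' hWhi hDW hD0)
    exact hfinal y hynot hB
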